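/- Let X = {x_1,...,x_n} with f(x_1) ≤ ... ≤ f(x_n), let p ∈ Σ_X, δ ∈ [0,1], and let r be the smallest index in {1,...,n} such that δ ≥ ∑_{i=r+1}^n p(x_i). If r > 1, define q_TV by q_TV(x_1) = p(x_1)+δ, q_TV(x_i) = p(x_i) for 2 ≤ i ≤ r-1, q_TV(x_r) = ∑_{i=r}^n p(x_i) - δ, and q_TV(x_i) = 0 for i > r; if r = 1 let q_TV be the point mass at x_1. Then q_TV ∈ B_TV(p,δ) and E_{q_TV}(f) = min_{q ∈ B_TV(p,δ)} E_q(f). -/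

import Mathlib

open Finset

lemma tvlb_abel_nonneg (n : ℕ) (F D : ℕ → ℝ)
    (hF : ∀ i, i + 1 < n → F i ≤ F (i + 1))
    (hsum : ∑ i ∈ range n, D i = 0)
    (hpartial : ∀ k, k < n → ∑ i ∈ range (k + 1), D i ≤ 0) :
    0 ≤ ∑ i ∈ range n, D i * F i := by
  have h := Finset.sum_range_by_parts F D n
  simp only [smul_eq_mul] at h
  have heq : ∑ i ∈ range n, D i * F i = ∑ i ∈ range n, F i * D i := by
    simp [mul_comm]
  rw [heq, h, hsum, mul_zero, zero_sub, neg_nonneg]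
  apply Finset.sum_nonpos
  intro i hi
  rw [Finset.mem_range] at hi
  have h1 : F i ≤ F (i + 1) := hF i (by omega)
  have h2 : ∑ j ∈ range (i + 1), D j ≤ 0 := hpartial i (by omega)
  nlinarith

lemma tvlb_sum_Iic_eq_range (n : ℕ) (g : Fin n → ℝ) (k : ℕ) (hk : k < n) :
    ∑ i ∈ Finset.Iic (⟨k, hk⟩ : Fin n), g i
      = ∑ j ∈ Finset.range (k + 1), if h : j < n then g ⟨j, h⟩ else 0 := by
  have h1 : ∑ j ∈ Finset.range (k + 1), (if h : j < n then g ⟨j, h⟩ else 0)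
      = ∑ j ∈ Finset.range (k + 1),
          (fun j => if h : j < n then (if j ≤ k then g ⟨j, h⟩ else 0) else 0) j := by
    apply Finset.sum_congr rfl
    intro j hj
    rw [mem_range] at hj
    simp only [dif_pos (by omega : j < n), if_pos (by omega : j ≤ k)]
  rw [h1, Finset.sum_subset (Finset.range_subset_range.2 (by omega : k + 1 ≤ n))
    (by intro x hx hx2; rw [mem_range] at hx; rw [mem_range] at hx2;
        simp [dif_pos hx, if_neg (by omega : ¬ x ≤ k)])]
  rw [← Fin.sum_univ_eq_sum_range]
  have h2 : ∀ i : Fin n, (if h : (i : ℕ) < n then (if (i : ℕ) ≤ k then g ⟨i, h⟩ else 0) else 0)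
      = if i ≤ (⟨k, hk⟩ : Fin n) then g i else 0 := by
    intro i
    simp [dif_pos i.isLt, Fin.le_def]
  simp only [h2]
  rw [← Finset.sum_filter]
  congr 1
  ext i; simp

lemma tvlb_split (n : ℕ) (a : Fin n) (g : Fin n → ℝ) :
    ∑ i, g i = ∑ i ∈ Iic a, g i + ∑ i ∈ Ioi a, g i := by
  rw [← Finset.sum_union (by simp [Finset.disjoint_left])]
  congr 1
  ext i; simp [le_or_gt]

lemma tvlb_Iic (n : ℕ) (a : Fin n) (g : Fin n → ℝ) :
    ∑ i ∈ Iic a, g i = ∑ i ∈ Iio a, g i + g a := by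
  rw [← Finset.Iio_insert, Finset.sum_insert (by simp)]; ring

lemma tvlb_Ici (n : ℕ) (a : Fin n) (g : Fin n → ℝ) :
    ∑ i ∈ Ici a, g i = g a + ∑ i ∈ Ioi a, g i := by
  rw [← Finset.Ioi_insert, Finset.sum_insert (by simp)]

/-- Partial sum bound for any member of the TV ball. -/
lemma tvlb_partial_bound (n : ℕ) (p q : Fin n → ℝ)
    (hq0 : ∀ i, 0 ≤ q i) (hq1 : ∑ i, q i = 1) (hp1 : ∑ i, p i = 1)
    (δ : ℝ) (htv : (1 / 2) * ∑ i, |q i - p i| ≤ δ) (t : Fin n) :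
    ∑ i ∈ Iic t, q i ≤ min 1 (∑ i ∈ Iic t, p i + δ) := by
  have h1 : ∑ i ∈ Iic t, q i ≤ 1 := by
    rw [← hq1]
    exact Finset.sum_le_sum_of_subset_of_nonneg (Finset.subset_univ _)
      (fun i _ _ => hq0 i)
  have hmax : ∑ i, max (q i - p i) 0 ≤ δ := by
    have hm : ∀ a : ℝ, max a 0 = (|a| + a) / 2 := by
      intro a
      rcases le_or_gt 0 a with h | h
      · rw [max_eq_left h, abs_of_nonneg h]; ring
      · rw [max_eq_right h.le, abs_of_neg h]; ring
    simp only [hm]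
    have : ∑ i, (|q i - p i| + (q i - p i)) / 2
        = (∑ i, |q i - p i|) / 2 + ((∑ i, q i) - ∑ i, p i) / 2 := by
      rw [← Finset.sum_div, Finset.sum_add_distrib, Finset.sum_sub_distrib]
      ring
    rw [this, hq1, hp1]
    linarith
  have h2 : ∑ i ∈ Iic t, (q i - p i) ≤ δ := by
    calc ∑ i ∈ Iic t, (q i - p i) ≤ ∑ i ∈ Iic t, max (q i - p i) 0 :=
          Finset.sum_le_sum (fun i _ => le_max_left _ _)
      _ ≤ ∑ i, max (q i - p i) 0 :=
          Finset.sum_le_sum_of_subset_of_nonneg (Finset.subset_univ _)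
            (fun i _ _ => le_max_right _ _)
      _ ≤ δ := hmax
  rw [Finset.sum_sub_distrib] at h2
  exact le_min h1 (by linarith)

/-- Closed form minimizer for the lower expectation over a total variation ball. -/
theorem tv_lower_expectation
    (n : ℕ) (hn : 0 < n) (f p : Fin n → ℝ) (hf : Monotone f)
    (hp0 : ∀ i, 0 ≤ p i) (hp1 : ∑ i, p i = 1)
    (δ : ℝ) (hδ0 : 0 ≤ δ) (hδ1 : δ ≤ 1)
    (r : Fin n)
    (hr : ∑ i ∈ Finset.Ioi r, p i ≤ δ)
    (hrmin : ∀ s : Fin n, s < r → δ < ∑ i ∈ Finset.Ioi s, p i)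
    (qTV : Fin n → ℝ)
    (hqTV : if r = (⟨0, hn⟩ : Fin n) then
        qTV = fun i => if i = (⟨0, hn⟩ : Fin n) then (1 : ℝ) else 0
      else
        qTV = fun i =>
          if i = (⟨0, hn⟩ : Fin n) then p i + δ
          else if i < r then p i
          else if i = r then (∑ j ∈ Finset.Ici r, p j) - δ
          else 0) :
    let B : Set (Fin n → ℝ) :=
      {q | ((∀ i, 0 ≤ q i) ∧ ∑ i, q i = 1) ∧ (1 / 2) * ∑ i, |q i - p i| ≤ δ}
    qTV ∈ B ∧
      IsLeast ((fun q : Fin n → ℝ => ∑ i, q i * f i) '' B) (∑ i, qTV i * f i) := by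
  intro B
  set z : Fin n := (⟨0, hn⟩ : Fin n) with hz
  have hzle : ∀ i : Fin n, z ≤ i := fun i => by simp [hz, Fin.le_def]
  obtain ⟨hmem, hQTV⟩ : qTV ∈ B ∧
      (∀ t : Fin n, min 1 (∑ i ∈ Iic t, p i + δ) ≤ ∑ i ∈ Iic t, qTV i) := by
    by_cases hr0 : r = z
    · rw [if_pos hr0] at hqTV
      subst hqTV
      have hT : ∑ i ∈ Ioi z, p i = 1 - p z := by
        have hsp := tvlb_split n z p
        rw [hp1, tvlb_Iic] at hsp
        have hIio : Iio z = (∅ : Finset (Fin n)) := by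
          ext i; simp [hz, Fin.lt_def]
        rw [hIio] at hsp
        simp at hsp
        linarith
      have hTd : 1 - p z ≤ δ := by rw [hr0] at hr; rw [hT] at hr; exact hr
      have hTnn : 0 ≤ 1 - p z := by
        rw [← hT]; exact Finset.sum_nonneg (fun i _ => hp0 i)
      refine ⟨⟨⟨fun i => ?_, ?_⟩, ?_⟩, fun t => ?_⟩
      · by_cases h : i = z <;> simp [h]
      · simp [Finset.sum_ite_eq']
      · have habs : ∀ i : Fin n, |(if i = z then (1:ℝ) else 0) - p i|
            = if i = z then 1 - p z else p i := by
          intro i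
          by_cases h : i = z
          · subst h; rw [if_pos rfl, if_pos rfl, abs_of_nonneg hTnn]
          · rw [if_neg h, if_neg h, zero_sub, abs_neg, abs_of_nonneg (hp0 i)]
        simp only [habs]
        rw [← Finset.add_sum_erase _ _ (Finset.mem_univ z), if_pos rfl]
        have he : ∑ x ∈ Finset.univ.erase z, (if x = z then 1 - p z else p x)
            = ∑ x ∈ Finset.univ.erase z, p x :=
          Finset.sum_congr rfl (fun x hx => if_neg (Finset.mem_erase.1 hx).1)
        rw [he, Finset.sum_erase_eq_sub (Finset.mem_univ z), hp1]
        linarith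
      · have : ∑ i ∈ Iic t, (if i = z then (1:ℝ) else 0) = 1 := by
          rw [Finset.sum_ite_eq' (Iic t) z (fun _ => (1:ℝ)),
            if_pos (Finset.mem_Iic.2 (hzle t))]
        rw [this]
        exact min_le_left _ _
    · rw [if_neg hr0] at hqTV
      subst hqTV
      set qT : Fin n → ℝ := fun i =>
          if i = z then p i + δ
          else if i < r then p i
          else if i = r then (∑ j ∈ Finset.Ici r, p j) - δ
          else 0 with hqT
      have hzr : z < r := lt_of_le_of_ne (hzle r) (Ne.symm hr0)
      have hδle : δ < ∑ i ∈ Ici r, p i := by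
        have hrv : (r : ℕ) ≠ 0 := fun h => hr0 (Fin.ext h)
        have hs : (⟨(r : ℕ) - 1, by omega⟩ : Fin n) < r := by
          simp [Fin.lt_def]; omega
        have hm := hrmin _ hs
        have hIoi : Ioi (⟨(r : ℕ) - 1, by omega⟩ : Fin n) = Ici r := by
          ext i; simp only [Finset.mem_Ioi, Finset.mem_Ici, Fin.lt_def, Fin.le_def]
          omega
        rwa [hIoi] at hm
      have hlow : ∀ i, i < r → qT i = p i + (if i = z then δ else 0) := by
        intro i h
        by_cases hiz : i = z
        · simp [hqT, hiz]
        · simp [hqT, hiz, h]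
      have hvr : qT r = ∑ j ∈ Ici r, p j - δ := by
        simp [hqT, hr0, lt_irrefl]
      have hvtop : ∀ i, r < i → qT i = 0 := by
        intro i h
        have h1 : i ≠ z := by
          intro hh; subst hh; exact absurd (lt_trans hzr h) (lt_irrefl z)
        have h2 : ¬ i < r := not_lt.2 h.le
        have h3 : i ≠ r := ne_of_gt h
        simp [hqT, h1, h2, h3]
      have hSIio : ∑ i ∈ Iio r, qT i = ∑ i ∈ Iio r, p i + δ := by
        rw [Finset.sum_congr rfl (fun i hi => hlow i (Finset.mem_Iio.1 hi)),
          Finset.sum_add_distrib, Finset.sum_ite_eq' (Iio r) z (fun _ => δ),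
          if_pos (Finset.mem_Iio.2 hzr)]
      have hSIoi : ∑ i ∈ Ioi r, qT i = 0 :=
        Finset.sum_eq_zero (fun i hi => hvtop i (Finset.mem_Ioi.1 hi))
      have hIci : ∑ i ∈ Ici r, p i = p r + ∑ i ∈ Ioi r, p i := tvlb_Ici n r p
      have hsplitp := tvlb_split n r p
      rw [hp1, tvlb_Iic] at hsplitp
      have hsum1 : ∑ i, qT i = 1 := by
        rw [tvlb_split n r qT, tvlb_Iic, hSIio, hSIoi, hvr]
        linarith
      have hnn : ∀ i, 0 ≤ qT i := by
        intro i
        rcases lt_trichotomy i r with h | h | h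
        · rw [hlow i h]
          have : (0:ℝ) ≤ if i = z then δ else 0 := by
            split <;> [exact hδ0; exact le_refl 0]
          linarith [hp0 i]
        · rw [h, hvr]; linarith
        · rw [hvtop i h]
      have h_tv : ∑ i, |qT i - p i| = 2 * δ := by
        rw [tvlb_split n r (fun i => |qT i - p i|), tvlb_Iic]
        have e1 : ∑ i ∈ Iio r, |qT i - p i| = δ := by
          have e1' : ∀ i ∈ Iio r, |qT i - p i| = if i = z then δ else 0 := by
            intro i hi
            rw [hlow i (Finset.mem_Iio.1 hi)]
            by_cases hiz : i = z
            · simp [hiz, abs_of_nonneg hδ0]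
            · simp [hiz]
          rw [Finset.sum_congr rfl e1',
            Finset.sum_ite_eq' (Iio r) z (fun _ => δ), if_pos (Finset.mem_Iio.2 hzr)]
        have e2 : |qT r - p r| = δ - ∑ i ∈ Ioi r, p i := by
          rw [hvr, hIci, abs_of_nonpos (by linarith)]
          ring
        have e3 : ∑ i ∈ Ioi r, |qT i - p i| = ∑ i ∈ Ioi r, p i := by
          apply Finset.sum_congr rfl
          intro i hi
          rw [hvtop i (Finset.mem_Ioi.1 hi), zero_sub, abs_neg, abs_of_nonneg (hp0 i)]
        rw [e1, e2, e3]; ring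
      refine ⟨⟨⟨hnn, hsum1⟩, by rw [h_tv]; linarith⟩, fun t => ?_⟩
      rcases lt_or_ge t r with ht | ht
      · have hSt : ∑ i ∈ Iic t, qT i = ∑ i ∈ Iic t, p i + δ := by
          rw [Finset.sum_congr rfl
              (fun i hi => hlow i (lt_of_le_of_lt (Finset.mem_Iic.1 hi) ht)),
            Finset.sum_add_distrib, Finset.sum_ite_eq' (Iic t) z (fun _ => δ),
            if_pos (Finset.mem_Iic.2 (hzle t))]
        rw [hSt]
        exact min_le_right _ _
      · have hSt : ∑ i ∈ Iic t, qT i = 1 := by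
          have hsp := tvlb_split n t qT
          rw [hsum1] at hsp
          have h0 : ∑ i ∈ Ioi t, qT i = 0 :=
            Finset.sum_eq_zero (fun i hi =>
              hvtop i (lt_of_le_of_lt ht (Finset.mem_Ioi.1 hi)))
          rw [h0] at hsp
          linarith
        rw [hSt]
        exact min_le_left _ _
  refine ⟨hmem, ⟨⟨qTV, hmem, rfl⟩, ?_⟩⟩
  rintro v ⟨q, hqB, rfl⟩
  obtain ⟨⟨hq0, hq1⟩, hqtv⟩ := hqB
  obtain ⟨⟨hT0, hT1⟩, _⟩ := hmem
  have key : 0 ≤ ∑ j ∈ range n,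
      (if h : j < n then q ⟨j, h⟩ - qTV ⟨j, h⟩ else 0) *
      (if h : j < n then f ⟨j, h⟩ else 0) := by
    apply tvlb_abel_nonneg
    · intro i hi
      rw [dif_pos (by omega : i < n), dif_pos hi]
      exact hf (by simp [Fin.le_def])
    · rw [← Fin.sum_univ_eq_sum_range (fun j => if h : j < n then q ⟨j, h⟩ - qTV ⟨j, h⟩ else 0) n]
      have : ∀ i : Fin n, (if h : (i : ℕ) < n then q ⟨i, h⟩ - qTV ⟨i, h⟩ else 0)
          = q i - qTV i := fun i => by simp [i.isLt]
      simp only [this]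
      rw [Finset.sum_sub_distrib, hq1, hT1, sub_self]
    · intro k hk
      rw [← tvlb_sum_Iic_eq_range n (fun i => q i - qTV i) k hk, Finset.sum_sub_distrib,
        sub_nonpos]
      exact le_trans (tvlb_partial_bound n p q hq0 hq1 hp1 δ hqtv _) (hQTV _)
  have hconv : ∑ j ∈ range n,
      (if h : j < n then q ⟨j, h⟩ - qTV ⟨j, h⟩ else 0) *
      (if h : j < n then f ⟨j, h⟩ else 0)
      = ∑ i, q i * f i - ∑ i, qTV i * f i := by
    rw [← Fin.sum_univ_eq_sum_range (fun j =>
      (if h : j < n then q ⟨j, h⟩ - qTV ⟨j, h⟩ else 0) *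
      (if h : j < n then f ⟨j, h⟩ else 0)) n]
    have : ∀ i : Fin n,
        (if h : (i : ℕ) < n then q ⟨i, h⟩ - qTV ⟨i, h⟩ else 0) *
        (if h : (i : ℕ) < n then f ⟨i, h⟩ else 0) = q i * f i - qTV i * f i := by
      intro i; simp [i.isLt]; ring
    simp only [this]
    rw [Finset.sum_sub_distrib]
  rw [hconv] at key
  linarith
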